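/- For every u ∈ (0, π), the derivative at u of the function u ↦ −d₀⁰(u)/(sin u·(sin u − u·cos u)) equals (2·(−1 + u² + cos(2u)) + u·sin(2u))²/(4·(sin u − u·cos u)²), where d₀⁰(u) = (1/2)·sin u·(2u³·sin u + 3u²·cos u + u·sin³ u − 6u·sin u + 3·cos u·sin² u). -/

import Mathlib

open Set Real

/-- For `u ∈ (0, π)`, the derivative of `u ↦ −d₀⁰(u)/(sin u·(sin u − u·cos u))`
equals `(2(−1 + u² + cos(2u)) + u·sin(2u))²/(4(sin u − u·cos u)²)`. -/
theorem deriv_d00_quotient :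
    ∀ u ∈ Ioo 0 π,
      deriv (fun u : ℝ =>
          -((1/2) * sin u * (2 * u ^ 3 * sin u + 3 * u ^ 2 * cos u + u * sin u ^ 3
              - 6 * u * sin u + 3 * cos u * sin u ^ 2))
            / (sin u * (sin u - u * cos u))) u
        = (2 * (-1 + u ^ 2 + cos (2 * u)) + u * sin (2 * u)) ^ 2
            / (4 * (sin u - u * cos u) ^ 2) := by
  intro u hu
  have hs : 0 < sin u := sin_pos_of_pos_of_lt_pi hu.1 hu.2
  have hsc : 0 < sin u - u * cos u := by
    rcases le_or_gt (cos u) 0 with h | h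
    · nlinarith [mul_nonneg hu.1.le (neg_nonneg.2 h)]
    · have hlt : u < π / 2 := by
        by_contra hge
        exact absurd (cos_nonpos_of_pi_div_two_le_of_le (le_of_not_gt hge)
          (by linarith [hu.2, pi_pos])) (not_le.2 h)
      have ht := lt_tan hu.1 hlt
      rw [tan_eq_sin_div_cos, lt_div_iff₀ h] at ht
      linarith
  have hD0 : sin u * (sin u - u * cos u) ≠ 0 := by positivity
  have hs1 := Real.hasDerivAt_sin u
  have hc1 := Real.hasDerivAt_cos u
  have hP := (((((hasDerivAt_pow 3 u).const_mul (2:ℝ)).mul hs1).add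
      (((hasDerivAt_pow 2 u).const_mul (3:ℝ)).mul hc1)).add
      ((hasDerivAt_id' (𝕜 := ℝ) u).mul (hs1.pow 3)) |>.sub
      (((hasDerivAt_id' (𝕜 := ℝ) u).const_mul (6:ℝ)).mul hs1)).add
      ((hc1.const_mul (3:ℝ)).mul (hs1.pow 2))
  have hNum := ((hs1.const_mul ((1:ℝ)/2)).mul hP).neg
  have hDen := hs1.mul (hs1.sub ((hasDerivAt_id' (𝕜 := ℝ) u).mul hc1))
  have hF := hNum.div hDen hD0
  rw [HasDerivAt.deriv (f := fun u : ℝ =>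
          -((1/2) * sin u * (2 * u ^ 3 * sin u + 3 * u ^ 2 * cos u + u * sin u ^ 3
              - 6 * u * sin u + 3 * cos u * sin u ^ 2))
            / (sin u * (sin u - u * cos u))) hF]
  simp only [Pi.mul_apply, Pi.pow_apply, Pi.sub_apply, Pi.add_apply, Pi.neg_apply]
  rw [Real.cos_two_mul, Real.sin_two_mul]
  have hpyth := sin_sq_add_cos_sq u
  have h1 : sin u ≠ 0 := hs.ne'
  have h2 : sin u - u * cos u ≠ 0 := hsc.ne'
  field_simp
  rw [div_left_inj' (pow_ne_zero 2 (by rwa [mul_comm] at h2 : sin u - cos u * u ≠ 0))]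
  linear_combination ((32 : ℝ)*Real.sin u + (-32 : ℝ)*Real.sin u*Real.cos u^2
    + (8 : ℝ)*Real.sin u^3 + (-8 : ℝ)*u*Real.sin u^2*Real.cos u
    + (-32 : ℝ)*u^2*Real.sin u + (4 : ℝ)*u^2*Real.sin u^3
    + (8 : ℝ)*u^4*Real.sin u) * hpyth
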